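/- With C ≥ 3 groups, B = ηK bins per group, and edges assigned uniformly and independently per group, the random bipartite graph is a (ε, 1/2, C)-expander (every subset S of left nodes with |S| ≤ εK has |N_c(S)| > |S|/2 in at least one group c) with probability at least 1 − O(1/K), for some sufficiently small constant ε > 0 depending on η and C. In particular, the failure probability contributed by subsets of size s = εK is at most exp(−K·log(1/(εc²))) for ε < 1/(2c²) with c = e(e/η)^{C/2}, and by constant-size subsets is O(1/K). -/

import Mathlib

open Finset

lemma pow_self_le_exp_mul_factorial (k : ℕ) : (k:ℝ) ^ k ≤ Real.exp 1 ^ k * k.factorial := by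
  have h := Real.pow_div_factorial_le_exp (x := (k:ℝ)) (by positivity) k
  have hf : (0:ℝ) < k.factorial := by exact_mod_cast k.factorial_pos
  rw [div_le_iff₀ hf] at h
  calc (k:ℝ)^k ≤ Real.exp k * k.factorial := h
    _ = Real.exp 1 ^ k * k.factorial := by rw [← Real.exp_nat_mul]; norm_num

lemma choose_le_epow (n : ℕ) {k : ℕ} (hk : 0 < k) :
    (n.choose k : ℝ) ≤ (Real.exp 1 * n / k) ^ k := by
  have h1 : (n.choose k : ℝ) ≤ (n:ℝ)^k / k.factorial := Nat.choose_le_pow_div k n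
  have hf : (0:ℝ) < k.factorial := by exact_mod_cast k.factorial_pos
  have hkp : (0:ℝ) < (k:ℝ)^k := by positivity
  have h2 := pow_self_le_exp_mul_factorial k
  calc (n.choose k : ℝ) ≤ (n:ℝ)^k / k.factorial := h1
    _ ≤ (Real.exp 1 * n / k) ^ k := by
        rw [div_pow, mul_pow, div_le_div_iff₀ hf (by positivity)]
        calc (n:ℝ)^k * (k:ℝ)^k ≤ (n:ℝ)^k * (Real.exp 1 ^ k * k.factorial) := by
              exact mul_le_mul_of_nonneg_left h2 (by positivity)
          _ = Real.exp 1 ^ k * (n:ℝ)^k * k.factorial := by ring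

lemma count_image_small {K B : ℕ} (S : Finset (Fin K)) (t : ℕ) (htB : t ≤ B) :
    ((univ : Finset (Fin K → Fin B)).filter
        (fun f => (S.image f).card ≤ t)).card
      ≤ B.choose t * (t ^ S.card * B ^ (K - S.card)) := by
  classical
  have hsub : (univ : Finset (Fin K → Fin B)).filter (fun f => (S.image f).card ≤ t)
      ⊆ (powersetCard t (univ : Finset (Fin B))).biUnion
          (fun T => (univ : Finset (Fin K → Fin B)).filter (fun f => ∀ i ∈ S, f i ∈ T)) := by
    intro f hf
    simp only [mem_filter, mem_univ, true_and] at hf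
    obtain ⟨T, hT1, hT2, hT3⟩ := Finset.exists_subsuperset_card_eq
      (Finset.subset_univ (S.image f)) hf (by simpa using htB)
    simp only [mem_biUnion, mem_powersetCard, mem_filter, mem_univ, true_and]
    exact ⟨T, ⟨hT2, hT3⟩, fun i hi => hT1 (Finset.mem_image_of_mem f hi)⟩
  refine (Finset.card_le_card hsub).trans ((Finset.card_biUnion_le).trans ?_)
  have hcard : ∀ T ∈ powersetCard t (univ : Finset (Fin B)),
      ((univ : Finset (Fin K → Fin B)).filter (fun f => ∀ i ∈ S, f i ∈ T)).card
        = t ^ S.card * B ^ (K - S.card) := by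
    intro T hT
    rw [mem_powersetCard] at hT
    have : (univ : Finset (Fin K → Fin B)).filter (fun f => ∀ i ∈ S, f i ∈ T)
        = Fintype.piFinset (fun i => if i ∈ S then T else univ) := by
      ext f
      simp only [mem_filter, mem_univ, true_and, Fintype.mem_piFinset]
      constructor
      · intro h i; split_ifs with hi
        · exact h i hi
        · exact mem_univ _
      · intro h i hi; have := h i; rwa [if_pos hi] at this
    rw [this, Fintype.card_piFinset]
    rw [← Finset.prod_sdiff (Finset.subset_univ S)]
    have e1 : ∀ i ∈ (univ : Finset (Fin K)) \ S, (if i ∈ S then T else univ).card = B := by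
      intro i hi
      rw [Finset.mem_sdiff] at hi
      rw [if_neg hi.2, card_univ, Fintype.card_fin]
    have e2 : ∀ i ∈ S, (if i ∈ S then T else univ).card = t := by
      intro i hi
      rw [if_pos hi, hT.2]
    have h1 : ∏ i ∈ (univ : Finset (Fin K)) \ S, (if i ∈ S then T else univ).card = B ^ (K - S.card) := by
      rw [Finset.prod_congr rfl e1, Finset.prod_const,
        Finset.card_sdiff_of_subset (Finset.subset_univ S), card_univ, Fintype.card_fin]
    have h2 : ∏ i ∈ S, (if i ∈ S then T else univ).card = t ^ S.card := by
      rw [Finset.prod_congr rfl e2, Finset.prod_const]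
    rw [h1, h2, mul_comm]
  rw [Finset.sum_congr rfl hcard, Finset.sum_const, Finset.card_powersetCard, card_univ,
    Fintype.card_fin, smul_eq_mul]

lemma count_pi_groups {C K B : ℕ} (P : (Fin K → Fin B) → Prop) [DecidablePred P] :
    ((univ : Finset (Fin C → Fin K → Fin B)).filter (fun A => ∀ c, P (A c))).card
      = ((univ : Finset (Fin K → Fin B)).filter P).card ^ C := by
  classical
  have : (univ : Finset (Fin C → Fin K → Fin B)).filter (fun A => ∀ c, P (A c))
      = Fintype.piFinset (fun _ => (univ : Finset (Fin K → Fin B)).filter P) := by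
    ext A
    simp [Fintype.mem_piFinset]
  rw [this, Fintype.card_piFinset, Finset.prod_const, card_univ, Fintype.card_fin]

lemma per_s_bound (η ε : ℝ) (hη : 0 < η) (hε : 0 < ε) (hεη : ε ≤ η)
    (hq : Real.exp 1 ^ 5 / (8 * η ^ 3) * ε ≤ 1 / 16)
    (K B s t : ℕ) (hK : 0 < K) (hB : (B:ℝ) = η * K)
    (hs2 : 2 ≤ s) (hsK : (s:ℝ) ≤ ε * K) (ht1 : 1 ≤ t) (ht2 : 2*t ≤ s) :
    (K.choose s : ℝ) * min 1 ((B.choose t : ℝ) * (t:ℝ)^s / (B:ℝ)^s) ^ 3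
      ≤ (1/2)^s / (ε * K) := by
  have hKR : (0:ℝ) < K := by exact_mod_cast hK
  have hBR : (0:ℝ) < B := by rw [hB]; positivity
  have hsR : (0:ℝ) < s := by positivity
  have htR : (0:ℝ) < t := by exact_mod_cast ht1
  have he1 : (1:ℝ) ≤ Real.exp 1 := by have := Real.add_one_le_exp 1; linarith
  have hsB : (s:ℝ) ≤ B := by
    rw [hB]; calc (s:ℝ) ≤ ε * K := hsK
      _ ≤ η * K := by nlinarith
  have ht2R : 2 * (t:ℝ) ≤ s := by exact_mod_cast ht2
  set e : ℝ := Real.exp 1 with he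
  set X : ℝ := (B.choose t : ℝ) * (t:ℝ)^s / (B:ℝ)^s with hX
  set m : ℝ := min 1 X with hm
  have hX0 : 0 ≤ X := by positivity
  have hm0 : 0 ≤ m := le_min zero_le_one hX0
  have hm1 : m ≤ 1 := min_le_left _ _
  have hmX : m ≤ X := min_le_right _ _
  set Y : ℝ := e ^ s * ((s:ℝ)/(2*B))^s with hY
  have hY0 : 0 ≤ Y := by positivity
  have hts : t ≤ s := by omega
  have hXle : X ≤ e ^ t * ((t:ℝ)/B) ^ (s - t) := by
    have h1 : X ≤ (e * B / t) ^ t * ((t:ℝ)/B)^s := by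
      rw [hX, mul_div_assoc, ← div_pow]
      exact mul_le_mul_of_nonneg_right (choose_le_epow B ht1) (by positivity)
    have h2 : (e * B / t) ^ t * ((t:ℝ)/B)^s = e ^ t * ((t:ℝ)/B) ^ (s - t) := by
      have h3 : ((t:ℝ)/B)^s = ((t:ℝ)/B)^t * ((t:ℝ)/B)^(s-t) := by
        rw [← pow_add, Nat.add_sub_cancel' hts]
      rw [h3, ← mul_assoc, ← mul_pow]
      congr 2
      field_simp
    linarith [h1, h2.symm.le]
  have hX2Y : X ^ 2 ≤ Y := by
    have h0 : (0:ℝ) ≤ (t:ℝ)/B := by positivity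
    have h3 : X ^ 2 ≤ (e ^ t * ((t:ℝ)/B) ^ (s - t)) ^ 2 :=
      pow_le_pow_left₀ hX0 hXle 2
    have h4 : (e ^ t * ((t:ℝ)/B) ^ (s - t)) ^ 2 = e ^ (2*t) * ((t:ℝ)/B) ^ (2*(s - t)) := by
      rw [mul_pow, ← pow_mul, ← pow_mul, mul_comm t 2, mul_comm (s-t) 2]
    have h5 : e ^ (2*t) ≤ e ^ s := pow_le_pow_right₀ he1 ht2
    have h6 : ((t:ℝ)/B) ^ (2*(s - t)) ≤ ((s:ℝ)/(2*B)) ^ (2*(s - t)) := by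
      apply pow_le_pow_left₀ h0
      rw [div_le_div_iff₀ hBR (by positivity)]
      nlinarith [ht2R, hBR]
    have h7 : ((s:ℝ)/(2*B)) ^ (2*(s - t)) ≤ ((s:ℝ)/(2*B)) ^ s := by
      apply pow_le_pow_of_le_one (by positivity) _ (by omega)
      rw [div_le_one (by positivity)]
      linarith
    calc X ^ 2 ≤ e ^ (2*t) * ((t:ℝ)/B) ^ (2*(s - t)) := by rw [← h4]; exact h3
      _ ≤ e ^ s * ((s:ℝ)/(2*B)) ^ s := by
          apply mul_le_mul h5 (h6.trans h7) (by positivity) (by positivity)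
  set Q : ℝ := (e * K / s) ^ s with hQdef
  have hQ0 : 0 ≤ Q := by rw [hQdef]; positivity
  have hQ : (K.choose s : ℝ) ≤ Q := choose_le_epow K (by omega)
  set M : ℝ := e^2/(2*η) with hM
  have hQY : Q * Y = M ^ s := by
    have inner : (e * K / s) * (e * ((s:ℝ)/(2*B))) = M := by
      rw [hM, hB]
      field_simp
    calc Q * Y = ((e*K/s) * (e * ((s:ℝ)/(2*B))))^s := by
          rw [hQdef, hY, ← mul_pow e ((s:ℝ)/(2*B)) s, ← mul_pow]
      _ = M^s := by rw [inner]
  have hm6 : m^6 ≤ Y^2 * min 1 Y := by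
    have hz : m^2 ≤ Y := (pow_le_pow_left₀ hm0 hmX 2).trans hX2Y
    have hz1 : m^2 ≤ 1 := by
      have := pow_le_pow_left₀ hm0 hm1 2
      simpa using this
    have hz0 : (0:ℝ) ≤ m^2 := by positivity
    calc m^6 = (m^2)^2 * m^2 := by ring
      _ ≤ Y^2 * min 1 Y := mul_le_mul (pow_le_pow_left₀ hz0 hz 2) (le_min hz1 hz) hz0 (by positivity)
  set q : ℝ := e^5/(8*η^3) with hqdef
  have hqpos : 0 < q := by rw [hqdef]; positivity
  have hkey : M^(2*s) * Y = (q * s / K)^s := by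
    have inner : M^2 * (e * ((s:ℝ)/(2*B))) = q * s / K := by
      rw [hM, hqdef, hB]
      field_simp
      ring
    calc M^(2*s) * Y = (M^2)^s * (e^s * ((s:ℝ)/(2*B))^s) := by rw [pow_mul, hY]
      _ = (M^2 * (e * ((s:ℝ)/(2*B))))^s := by rw [← mul_pow e ((s:ℝ)/(2*B)) s, ← mul_pow]
      _ = (q * s / K)^s := by rw [inner]
  have hfin : (q * s / K)^s * (ε*K)^2 ≤ ((1/4):ℝ)^s := by
    obtain ⟨p, hp⟩ : ∃ p, s = p + 2 := ⟨s - 2, by omega⟩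
    have hxsp : ∀ x : ℝ, x^s = x^p * x^2 := fun x => by rw [hp, pow_add]
    have hKp : ((s:ℝ)/ε)^p ≤ (K:ℝ)^p := by
      apply pow_le_pow_left₀ (by positivity)
      rw [div_le_iff₀ hε]
      linarith [hsK]
    have hs4 : (s:ℝ)^2 ≤ 4^s := by
      have h2s : (s:ℝ) ≤ 2^s := by exact_mod_cast (Nat.lt_two_pow_self (n := s)).le
      calc (s:ℝ)^2 ≤ ((2:ℝ)^s)^2 := pow_le_pow_left₀ (by positivity) h2s 2
        _ = 4^s := by rw [← pow_mul, mul_comm, pow_mul]; norm_num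
    have hqe : (q*ε)^s ≤ ((1/16):ℝ)^s :=
      pow_le_pow_left₀ (by positivity) hq s
    have step1 : (q * s / K)^s * (ε*K)^2 = (q*s)^s * ε^2 / (K:ℝ)^p := by
      rw [div_pow, hxsp (K:ℝ)]
      field_simp
    have step2 : (q*s)^s * ε^2 / (K:ℝ)^p ≤ (q*s)^s * ε^2 / ((s:ℝ)/ε)^p :=
      div_le_div_of_nonneg_left (by positivity) (by positivity) hKp
    have step3 : (q*s)^s * ε^2 / ((s:ℝ)/ε)^p = (q*ε)^s * (s:ℝ)^2 := by
      rw [hxsp (q*(s:ℝ)), hxsp (q*ε), div_pow]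
      field_simp
      ring
    calc (q * s / K)^s * (ε*K)^2 = (q*s)^s * ε^2 / (K:ℝ)^p := step1
      _ ≤ (q*s)^s * ε^2 / ((s:ℝ)/ε)^p := step2
      _ = (q*ε)^s * (s:ℝ)^2 := step3
      _ ≤ ((1/16):ℝ)^s * 4^s := mul_le_mul hqe hs4 (by positivity) (by positivity)
      _ = ((1/4):ℝ)^s := by rw [← mul_pow]; norm_num
  rw [le_div_iff₀ (by positivity)]
  have hlhs0 : 0 ≤ (K.choose s : ℝ) * m ^ 3 * (ε * K) := by positivity
  have hrhs0 : (0:ℝ) ≤ (1/2:ℝ)^s := by positivity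
  have hsq : ((K.choose s : ℝ) * m ^ 3 * (ε * K))^2 ≤ (((1:ℝ)/2)^s)^2 := by
    have e1 : ((K.choose s : ℝ) * m ^ 3 * (ε * K))^2
        = (K.choose s : ℝ)^2 * m^6 * (ε*K)^2 := by ring
    have e2 : (((1:ℝ)/2)^s)^2 = ((1/4):ℝ)^s := by
      rw [← pow_mul, mul_comm, pow_mul]; norm_num
    rw [e1, e2]
    calc (K.choose s : ℝ)^2 * m^6 * (ε*K)^2
        ≤ Q^2 * (Y^2 * min 1 Y) * (ε*K)^2 := by
          apply mul_le_mul_of_nonneg_right _ (by positivity)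
          apply mul_le_mul (pow_le_pow_left₀ (by positivity) hQ 2) hm6 (by positivity) (by positivity)
      _ = (Q*Y)^2 * min 1 Y * (ε*K)^2 := by ring
      _ = M^(2*s) * min 1 Y * (ε*K)^2 := by rw [hQY, ← pow_mul, mul_comm s 2]
      _ ≤ M^(2*s) * Y * (ε*K)^2 := by
          apply mul_le_mul_of_nonneg_right _ (by positivity)
          apply mul_le_mul_of_nonneg_left (min_le_right _ _) (by positivity)
      _ = (q * s / K)^s * (ε*K)^2 := by rw [hkey]
      _ ≤ ((1/4):ℝ)^s := hfin
  have := Real.sqrt_le_sqrt hsq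
  rwa [Real.sqrt_sq hlhs0, Real.sqrt_sq hrhs0] at this

lemma ratio_le (C K B : ℕ) (hC : 3 ≤ C) (hB1 : 0 < B) (S : Finset (Fin K))
    (hs2 : 2 ≤ S.card) (hsB : S.card ≤ B) :
    (((univ : Finset (Fin C → Fin K → Fin B)).filter
        (fun A => ∀ c, 2 * ((S.image (A c)).card) ≤ S.card)).card : ℝ)
      / ((Fintype.card (Fin C → Fin K → Fin B) : ℝ))
    ≤ (min 1 ((B.choose (S.card/2) : ℝ) * ((S.card/2 : ℕ) : ℝ)^S.card / (B:ℝ)^S.card)) ^ 3 := by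
  classical
  set s := S.card with hs
  set t := s / 2 with htdef
  have htB : t ≤ B := le_trans (Nat.div_le_self s 2) hsB
  have hsK : s ≤ K := by
    calc s = S.card := hs.symm ▸ rfl
      _ ≤ (univ : Finset (Fin K)).card := card_le_card (subset_univ S)
      _ = K := by simp
  have hBR : (0:ℝ) < B := by exact_mod_cast hB1
  have hD : (Fintype.card (Fin C → Fin K → Fin B) : ℝ) = ((B:ℝ)^K)^C := by
    rw [Fintype.card_fun, Fintype.card_fun, Fintype.card_fin, Fintype.card_fin,
      Fintype.card_fin]
    push_cast
    ring
  set badF : Finset (Fin K → Fin B) :=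
    (univ : Finset (Fin K → Fin B)).filter (fun f => 2 * (S.image f).card ≤ s) with hbadF
  have hcount : ((univ : Finset (Fin C → Fin K → Fin B)).filter
      (fun A => ∀ c, 2 * ((S.image (A c)).card ) ≤ S.card)).card = badF.card ^ C :=
    count_pi_groups (fun f => 2 * (S.image f).card ≤ s)
  set p : ℝ := (badF.card : ℝ) / (B:ℝ)^K with hp
  have hp0 : 0 ≤ p := by positivity
  have hp1 : p ≤ 1 := by
    rw [hp, div_le_one (by positivity)]
    have : badF.card ≤ (B:ℕ)^K := by
      calc badF.card ≤ (univ : Finset (Fin K → Fin B)).card := card_le_card (filter_subset _ _)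
        _ = B^K := by rw [card_univ, Fintype.card_fun, Fintype.card_fin, Fintype.card_fin]
    exact_mod_cast this
  set X : ℝ := (B.choose t : ℝ) * ((t:ℕ) : ℝ)^s / (B:ℝ)^s with hX
  have hpX : p ≤ X := by
    have h1 : badF ⊆ (univ : Finset (Fin K → Fin B)).filter (fun f => (S.image f).card ≤ t) := by
      intro f hf
      rw [hbadF, mem_filter] at hf
      rw [mem_filter]
      refine ⟨hf.1, ?_⟩
      exact (Nat.le_div_iff_mul_le two_pos).mpr (by linarith [hf.2])
    have h2 : badF.card ≤ B.choose t * (t ^ s * B ^ (K - s)) :=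
      le_trans (card_le_card h1) (count_image_small S t htB)
    have h3 : ((badF.card : ℝ)) ≤ (B.choose t : ℝ) * ((t:ℝ) ^ s * (B:ℝ) ^ (K - s)) := by
      exact_mod_cast h2
    rw [hp, hX, div_le_div_iff₀ (by positivity) (by positivity)]
    have hBK : (B:ℝ)^K = (B:ℝ)^(K-s) * (B:ℝ)^s := by
      rw [← pow_add, Nat.sub_add_cancel hsK]
    rw [hBK]
    calc (badF.card : ℝ) * (B:ℝ)^s
        ≤ (B.choose t : ℝ) * ((t:ℝ)^s * (B:ℝ)^(K-s)) * (B:ℝ)^s :=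
          mul_le_mul_of_nonneg_right h3 (by positivity)
      _ = (B.choose t : ℝ) * (t:ℝ)^s * ((B:ℝ)^(K-s) * (B:ℝ)^s) := by ring
  have hpm : p ≤ min 1 X := le_min hp1 hpX
  rw [hcount, hD]
  push_cast
  rw [← div_pow]
  calc p ^ C ≤ p ^ 3 := pow_le_pow_of_le_one hp0 hp1 hC
    _ ≤ (min 1 X) ^ 3 := pow_le_pow_left₀ hp0 hpm 3

theorem random_graph_is_expander (C : ℕ) (hC : 3 ≤ C) (η : ℝ) (hη : 0 < η) :
    ∃ ε : ℝ, 0 < ε ∧ ∃ c₀ : ℝ, 0 < c₀ ∧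
      ∀ K B : ℕ, 0 < K → (B : ℝ) = η * K →
        ((Finset.univ.filter (fun A : Fin C → Fin K → Fin B =>
            ¬ (∀ S : Finset (Fin K), S.Nonempty → (S.card : ℝ) ≤ ε * K →
                ∃ c : Fin C, (S.card : ℝ) < 2 * (S.image (A c)).card))).card : ℝ)
              / (Fintype.card (Fin C → Fin K → Fin B) : ℝ)
          ≤ c₀ / K := by
  classical
  set q : ℝ := Real.exp 1 ^ 5 / (8 * η ^ 3) with hqdef
  have hqpos : 0 < q := by
    rw [hqdef]
    have : 0 < Real.exp 1 := Real.exp_pos 1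
    positivity
  set ε : ℝ := min η ((1/16)/q) with hεdef
  have hε : 0 < ε := lt_min hη (by positivity)
  have hεη : ε ≤ η := min_le_left _ _
  have hqε : q * ε ≤ 1/16 := by
    have h1 : ε ≤ (1/16)/q := min_le_right _ _
    calc q * ε ≤ q * ((1/16)/q) := by nlinarith
      _ = 1/16 := by field_simp
  refine ⟨ε, hε, 2/ε, by positivity, ?_⟩
  intro K B hK hB
  have hKR : (0:ℝ) < K := by exact_mod_cast hK
  have hBR : (0:ℝ) < B := by rw [hB]; positivity
  have hB1 : 0 < B := by exact_mod_cast hBR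
  have hD : (0:ℝ) < (Fintype.card (Fin C → Fin K → Fin B) : ℝ) := by
    have hne : Nonempty (Fin C → Fin K → Fin B) := ⟨fun _ _ => ⟨0, hB1⟩⟩
    have : 0 < Fintype.card (Fin C → Fin K → Fin B) := Fintype.card_pos
    exact_mod_cast this
  set D : ℝ := (Fintype.card (Fin C → Fin K → Fin B) : ℝ) with hDdef
  set 𝒮 : Finset (Finset (Fin K)) :=
    univ.filter (fun S => 2 ≤ S.card ∧ (S.card:ℝ) ≤ ε * K) with h𝒮
  set FS : Finset (Fin K) → Finset (Fin C → Fin K → Fin B) :=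
    (fun S => univ.filter (fun A => ∀ c, 2 * ((S.image (A c)).card) ≤ S.card)) with hFS
  -- Step 1: inclusion in the union
  have hsub : (Finset.univ.filter (fun A : Fin C → Fin K → Fin B =>
      ¬ (∀ S : Finset (Fin K), S.Nonempty → (S.card : ℝ) ≤ ε * K →
          ∃ c : Fin C, (S.card : ℝ) < 2 * (S.image (A c)).card)))
        ⊆ 𝒮.biUnion FS := by
    intro A hA
    rw [mem_filter] at hA
    obtain ⟨-, hA⟩ := hA
    push_neg at hA
    obtain ⟨S, hne, hcard, hall⟩ := hA
    have hallN : ∀ c, 2 * (S.image (A c)).card ≤ S.card := by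
      intro c
      have := hall c
      exact_mod_cast this
    have hs2 : 2 ≤ S.card := by
      have c0 : Fin C := ⟨0, by omega⟩
      have him : 1 ≤ (S.image (A c0)).card := card_pos.mpr (hne.image _)
      have := hallN c0
      omega
    rw [mem_biUnion]
    refine ⟨S, ?_, ?_⟩
    · rw [h𝒮, mem_filter]
      exact ⟨mem_univ _, hs2, hcard⟩
    · rw [hFS, mem_filter]
      exact ⟨mem_univ _, hallN⟩
  -- Step 2: probability bounded by sum of ratios
  have step2 : ((Finset.univ.filter (fun A : Fin C → Fin K → Fin B =>
      ¬ (∀ S : Finset (Fin K), S.Nonempty → (S.card : ℝ) ≤ ε * K →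
          ∃ c : Fin C, (S.card : ℝ) < 2 * (S.image (A c)).card))).card : ℝ) / D
      ≤ ∑ S ∈ 𝒮, ((FS S).card : ℝ) / D := by
    rw [← sum_div]
    gcongr
    push_cast
    calc ((Finset.univ.filter (fun A : Fin C → Fin K → Fin B =>
        ¬ (∀ S : Finset (Fin K), S.Nonempty → (S.card : ℝ) ≤ ε * K →
            ∃ c : Fin C, (S.card : ℝ) < 2 * (S.image (A c)).card))).card : ℝ)
        ≤ ((𝒮.biUnion FS).card : ℝ) := by exact_mod_cast card_le_card hsub
      _ ≤ ∑ S ∈ 𝒮, ((FS S).card : ℝ) := by exact_mod_cast card_biUnion_le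
  set g : ℕ → ℝ := fun s =>
    (min 1 ((B.choose (s/2) : ℝ) * ((s/2 : ℕ) : ℝ)^s / (B:ℝ)^s)) ^ 3 with hg
  have hg0 : ∀ s, 0 ≤ g s := by
    intro s
    rw [hg]
    have h1 : (0:ℝ) ≤ (B.choose (s/2) : ℝ) * ((s/2 : ℕ) : ℝ)^s / (B:ℝ)^s := by positivity
    positivity
  -- Step 3: ratio per subset
  have step3 : ∑ S ∈ 𝒮, ((FS S).card : ℝ) / D ≤ ∑ S ∈ 𝒮, g S.card := by
    apply sum_le_sum
    intro S hS
    rw [h𝒮, mem_filter] at hS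
    obtain ⟨-, hs2, hcard⟩ := hS
    have hsB : S.card ≤ B := by
      have : (S.card : ℝ) ≤ B := by
        rw [hB]
        calc (S.card:ℝ) ≤ ε * K := hcard
          _ ≤ η * K := by nlinarith
      exact_mod_cast this
    exact ratio_le C K B hC hB1 S hs2 hsB
  -- Step 4: group by size
  set n : ℕ := ⌊ε * K⌋₊ with hn
  have step4 : ∑ S ∈ 𝒮, g S.card ≤ ∑ s ∈ Icc 2 n, (K.choose s : ℝ) * g s := by
    have hsub2 : 𝒮 ⊆ (Icc 2 n).biUnion (fun s => powersetCard s (univ : Finset (Fin K))) := by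
      intro S hS
      rw [h𝒮, mem_filter] at hS
      obtain ⟨-, hs2, hcard⟩ := hS
      rw [mem_biUnion]
      refine ⟨S.card, ?_, ?_⟩
      · rw [mem_Icc]
        exact ⟨hs2, Nat.le_floor hcard⟩
      · rw [mem_powersetCard]
        exact ⟨subset_univ S, rfl⟩
    have hdisj : (Icc 2 n : Set ℕ).PairwiseDisjoint
        (fun s => powersetCard s (univ : Finset (Fin K))) := by
      intro a _ b _ hab
      simp only [Function.onFun, Finset.disjoint_left]
      intro S hSa hSb
      rw [mem_powersetCard] at hSa hSb
      exact hab (hSa.2.symm.trans hSb.2)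
    calc ∑ S ∈ 𝒮, g S.card
        ≤ ∑ S ∈ (Icc 2 n).biUnion (fun s => powersetCard s (univ : Finset (Fin K))), g S.card :=
          sum_le_sum_of_subset_of_nonneg hsub2 (fun S _ _ => hg0 S.card)
      _ = ∑ s ∈ Icc 2 n, ∑ S ∈ powersetCard s (univ : Finset (Fin K)), g S.card :=
          sum_biUnion hdisj
      _ = ∑ s ∈ Icc 2 n, (K.choose s : ℝ) * g s := by
          apply sum_congr rfl
          intro s hs
          rw [sum_congr rfl (fun S hS => by rw [(mem_powersetCard.mp hS).2]), sum_const,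
            card_powersetCard, card_univ, Fintype.card_fin, nsmul_eq_mul]
  -- Step 5: per size bound
  have step5 : ∑ s ∈ Icc 2 n, (K.choose s : ℝ) * g s
      ≤ ∑ s ∈ Icc 2 n, ((1:ℝ)/2)^s / (ε * K) := by
    apply sum_le_sum
    intro s hs
    rw [mem_Icc] at hs
    have hsK : (s:ℝ) ≤ ε * K := le_trans (by exact_mod_cast hs.2) (Nat.floor_le (by positivity))
    have ht1 : 1 ≤ s / 2 := (Nat.le_div_iff_mul_le two_pos).mpr (by omega)
    have ht2 : 2 * (s / 2) ≤ s := by rw [mul_comm]; exact Nat.div_mul_le_self s 2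
    exact per_s_bound η ε hη hε hεη hqε K B s (s/2) hK hB hs.1 hsK ht1 ht2
  -- Step 6: geometric sum
  have step6 : ∑ s ∈ Icc 2 n, ((1:ℝ)/2)^s / (ε * K) ≤ (2/ε) / K := by
    rw [← sum_div]
    rw [div_div]
    apply div_le_div_of_nonneg_right _ (by positivity)
    calc ∑ s ∈ Icc 2 n, ((1:ℝ)/2)^s
        ≤ ∑ s ∈ range (n+1), ((1:ℝ)/2)^s := by
          apply sum_le_sum_of_subset_of_nonneg
          · intro s hs
            rw [mem_Icc] at hs
            rw [mem_range]
            omega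
          · intro s _ _
            positivity
      _ ≤ 2 := by
          rw [geom_sum_eq (by norm_num : ((1:ℝ)/2) ≠ 1)]
          have h1 : (0:ℝ) ≤ ((1:ℝ)/2)^(n+1) := by positivity
          rw [div_le_iff_of_neg (by norm_num : ((1:ℝ)/2) - 1 < 0)]
          linarith
  calc ((Finset.univ.filter (fun A : Fin C → Fin K → Fin B =>
      ¬ (∀ S : Finset (Fin K), S.Nonempty → (S.card : ℝ) ≤ ε * K →
          ∃ c : Fin C, (S.card : ℝ) < 2 * (S.image (A c)).card))).card : ℝ) / D
      ≤ ∑ S ∈ 𝒮, ((FS S).card : ℝ) / D := step2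
    _ ≤ ∑ S ∈ 𝒮, g S.card := step3
    _ ≤ ∑ s ∈ Icc 2 n, (K.choose s : ℝ) * g s := step4
    _ ≤ ∑ s ∈ Icc 2 n, ((1:ℝ)/2)^s / (ε * K) := step5
    _ ≤ (2/ε) / K := step6
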